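/- arXiv:1511.06071 — 2 statements merged into one kernel-verified Lean document; each statement's English description precedes it below -/
import Mathlib

section
/- Slepian–Wolf coding with full side information at the decoder: Let X and U be finite alphabets and P_XU a joint pmf on X × U. For every δ > 0 and ε > 0 and all sufficiently large n, there exist a finite set M with |M| ≤ 2^{n(H(X|U)+δ)}, an encoder φ : X^n → M, and a decoder D : M × U^n → X^n such that the n-fold product pmf P_XU^{⊗n} assigns probability at most ε to the set {(x^n,u^n) : D(φ(x^n), u^n) ≠ x^n}. -/
open scoped BigOperators
open Finset

set_option maxHeartbeats 2000000

/-- Shannon entropy (base 2) of a pmf on a finite set. -/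
noncomputable def shEnt {S : Type*} [Fintype S] (p : S → ℝ) : ℝ :=
  ∑ s, -(p s * Real.logb 2 (p s))

/-- Conditional Shannon entropy `H(X|U)` computed from a joint pmf on `X × U`. -/
noncomputable def condEnt {X U : Type*} [Fintype X] [Fintype U] (P : X × U → ℝ) : ℝ :=
  shEnt P - shEnt (fun u => ∑ x, P (x, u))

private lemma sw_rpow_sum {ι : Type*} (s : Finset ι) (f : ι → ℝ) :
    (2:ℝ) ^ (∑ i ∈ s, f i) = ∏ i ∈ s, (2:ℝ) ^ (f i) := by
  induction s using Finset.cons_induction with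
  | empty => simp
  | cons a s ha ih => rw [Finset.sum_cons, Finset.prod_cons, Real.rpow_add two_pos, ih]

private lemma sw_sum_fun_prod {Z : Type} [Fintype Z] {n : ℕ} (a : Fin n → Z → ℝ) :
    ∑ zs : Fin n → Z, ∏ t, a t (zs t) = ∏ t, ∑ z, a t z :=
  (Fintype.prod_sum a).symm

private lemma sw_second_moment {Z : Type} [Fintype Z] (q f : Z → ℝ)
    (hq1 : ∑ z, q z = 1) (hf0 : ∑ z, q z * f z = 0) (n : ℕ) :
    ∑ zs : Fin n → Z, (∏ t, q (zs t)) * (∑ t, f (zs t)) ^ 2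
      = n * ∑ z, q z * f z ^ 2 := by
  classical
  have key : ∀ t s : Fin n,
      (∑ zs : Fin n → Z, (∏ r, q (zs r)) * (f (zs t) * f (zs s)))
        = if t = s then ∑ z, q z * f z ^ 2 else 0 := by
    intro t s
    have hprod : ∀ zs : Fin n → Z,
        (∏ r, q (zs r)) * (f (zs t) * f (zs s))
          = ∏ r, (q (zs r) * (if t = r then f (zs r) else 1)
              * (if s = r then f (zs r) else 1)) := by
      intro zs
      rw [Finset.prod_mul_distrib, Finset.prod_mul_distrib,
        Finset.prod_ite_eq, Finset.prod_ite_eq]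
      simp [mul_assoc]
    calc (∑ zs : Fin n → Z, (∏ r, q (zs r)) * (f (zs t) * f (zs s)))
        = ∑ zs : Fin n → Z, ∏ r, (q (zs r) * (if t = r then f (zs r) else 1)
            * (if s = r then f (zs r) else 1)) := by
          exact Finset.sum_congr rfl fun zs _ => hprod zs
      _ = ∏ r, ∑ z, (q z * (if t = r then f z else 1) * (if s = r then f z else 1)) :=
          sw_sum_fun_prod (fun r z => q z * (if t = r then f z else 1) * (if s = r then f z else 1))
      _ = if t = s then ∑ z, q z * f z ^ 2 else 0 := by
          by_cases hts : t = s
          · subst hts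
            rw [if_pos rfl]
            have h1 : ∀ r : Fin n, (∑ z, (q z * (if t = r then f z else 1)
                * (if t = r then f z else 1))) = if t = r then ∑ z, q z * f z ^ 2 else 1 := by
              intro r
              by_cases h : t = r
              · simp only [h, if_pos rfl, if_true]
                exact Finset.sum_congr rfl fun z _ => by ring
              · simp [h, hq1]
            rw [Finset.prod_congr rfl fun r _ => h1 r]
            simp [Finset.prod_ite_eq]
          · rw [if_neg hts]
            apply Finset.prod_eq_zero (Finset.mem_univ t)
            simp only [if_pos rfl, if_neg (fun h => hts (h.symm ▸ rfl) : ¬ s = t)]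
            calc (∑ z, q z * f z * 1) = ∑ z, q z * f z := by simp
              _ = 0 := hf0
  calc (∑ zs : Fin n → Z, (∏ t, q (zs t)) * (∑ t, f (zs t)) ^ 2)
      = ∑ zs : Fin n → Z, ∑ t, ∑ s, (∏ r, q (zs r)) * (f (zs t) * f (zs s)) := by
        apply Finset.sum_congr rfl; intro zs _
        rw [sq, Finset.sum_mul_sum, Finset.mul_sum]
        exact Finset.sum_congr rfl fun t _ => by rw [Finset.mul_sum]
    _ = ∑ t, ∑ s, ∑ zs : Fin n → Z, (∏ r, q (zs r)) * (f (zs t) * f (zs s)) := by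
        rw [Finset.sum_comm]
        exact Finset.sum_congr rfl fun t _ => Finset.sum_comm
    _ = ∑ t : Fin n, ∑ s : Fin n, if t = s then ∑ z, q z * f z ^ 2 else 0 := by
        exact Finset.sum_congr rfl fun t _ => Finset.sum_congr rfl fun s _ => key t s
    _ = n * ∑ z, q z * f z ^ 2 := by
        simp [Finset.sum_ite_eq, Finset.mul_sum]

private lemma sw_card_collide {A : Type} [Fintype A] [DecidableEq A] (m : ℕ) {a b : A}
    (hab : a ≠ b) :
    Fintype.card {φ : A → Fin m // φ a = φ b} = m ^ (Fintype.card A - 1) := by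
  have e : {φ : A → Fin m // φ a = φ b} ≃ ({x : A // x ≠ b} → Fin m) :=
    { toFun := fun φ x => φ.1 x.1
      invFun := fun g =>
        ⟨fun x => if h : x = b then g ⟨a, hab⟩ else g ⟨x, h⟩, by simp [hab]⟩
      left_inv := by
        rintro ⟨φ, hφ⟩
        ext x
        by_cases h : x = b
        · subst h; simp [← hφ]
        · simp [h]
      right_inv := by
        intro g
        funext x
        simp [x.2] }
  rw [Fintype.card_congr e, Fintype.card_fun, Fintype.card_fin]
  congr 1
  rw [Fintype.card_subtype_compl, Fintype.card_subtype_eq]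

private lemma sw_condEnt_eq {X U : Type} [Fintype X] [Fintype U] (P : X × U → ℝ) :
    condEnt P = ∑ z : X × U, P z *
      (if P z = 0 then 0 else Real.logb 2 (∑ x, P (x, z.2)) - Real.logb 2 (P z)) := by
  classical
  have h2 : shEnt (fun u => ∑ x, P (x, u))
      = ∑ z : X × U, -(P z * Real.logb 2 (∑ x, P (x, z.2))) := by
    rw [shEnt, Fintype.sum_prod_type_right]
    apply Finset.sum_congr rfl
    intro u _
    rw [Finset.sum_mul, ← Finset.sum_neg_distrib]
  rw [condEnt, h2, shEnt, ← Finset.sum_sub_distrib]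
  apply Finset.sum_congr rfl
  intro z _
  by_cases h : P z = 0
  · simp [h]
  · rw [if_neg h]; ring

/-- Slepian–Wolf coding with full side information at the decoder. -/
theorem slepian_wolf_full_side_info
    {X U : Type} [Fintype X] [Fintype U] [DecidableEq X]
    (P : X × U → ℝ) (hP0 : ∀ z, 0 ≤ P z) (hP1 : ∑ z, P z = 1)
    (δ ε : ℝ) (hδ : 0 < δ) (hε : 0 < ε) :
    ∃ N : ℕ, ∀ n, N ≤ n →
      ∃ (M : Type) (_ : Fintype M)
        (φ : (Fin n → X) → M) (D : M × (Fin n → U) → (Fin n → X)),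
        (Fintype.card M : ℝ) ≤ 2 ^ ((n : ℝ) * (condEnt P + δ)) ∧
        ∑ xs : Fin n → X, ∑ us : Fin n → U,
          (if D (φ xs, us) ≠ xs then ∏ t, P (xs t, us t) else 0) ≤ ε := by
  classical
  set g : X × U → ℝ := fun z =>
    if P z = 0 then 0 else Real.logb 2 (∑ x, P (x, z.2)) - Real.logb 2 (P z) with hgdef
  have hPle : ∀ z : X × U, P z ≤ ∑ x, P (x, z.2) := by
    intro z
    have := Finset.single_le_sum (f := fun x => P (x, z.2)) (fun x _ => hP0 _)
      (Finset.mem_univ z.1)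
    simpa using this
  have hfac : ∀ z : X × U, P z ≠ 0 →
      P z = (∑ x, P (x, z.2)) * 2 ^ (-(g z)) := by
    intro z hz0
    have hz : 0 < P z := lt_of_le_of_ne (hP0 z) (Ne.symm hz0)
    have hzu : 0 < ∑ x, P (x, z.2) := lt_of_lt_of_le hz (hPle z)
    have hg : g z = Real.logb 2 (∑ x, P (x, z.2)) - Real.logb 2 (P z) := by
      simp [hgdef, hz0]
    rw [hg, neg_sub, Real.rpow_sub two_pos,
      Real.rpow_logb two_pos (by norm_num) hz,
      Real.rpow_logb two_pos (by norm_num) hzu]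
    field_simp
  have hgnn : ∀ z, 0 ≤ g z := by
    intro z
    by_cases h : P z = 0
    · simp [hgdef, h]
    · have hz : 0 < P z := lt_of_le_of_ne (hP0 z) (Ne.symm h)
      simp only [hgdef, if_neg h]
      have := Real.logb_le_logb_of_le (b := 2) one_lt_two hz (hPle z)
      linarith
  have hmean : ∑ z, P z * g z = condEnt P := (sw_condEnt_eq P).symm
  have hH0 : 0 ≤ condEnt P := by
    rw [← hmean]
    exact Finset.sum_nonneg fun z _ => mul_nonneg (hP0 z) (hgnn z)
  set σ2 : ℝ := ∑ z, P z * (g z - condEnt P) ^ 2 with hσdef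
  have hσnn : 0 ≤ σ2 :=
    Finset.sum_nonneg fun z _ => mul_nonneg (hP0 z) (sq_nonneg _)
  have hg0 : ∑ z, P z * (g z - condEnt P) = 0 := by
    have : ∑ z, P z * (g z - condEnt P)
        = (∑ z, P z * g z) - (∑ z, P z) * condEnt P := by
      rw [Finset.sum_mul, ← Finset.sum_sub_distrib]
      exact Finset.sum_congr rfl fun z _ => by ring
    rw [this, hmean, hP1, one_mul, sub_self]
  refine ⟨⌈8 * σ2 / (ε * δ ^ 2)⌉₊ + ⌈1 / δ⌉₊ + ⌈16 / (ε * δ)⌉₊ + 1, ?_⟩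
  intro n hn
  have hn1 : 1 ≤ n := le_trans (by omega) hn
  have hn0 : (0:ℝ) < n := by exact_mod_cast hn1
  have hnA : 8 * σ2 / (ε * δ ^ 2) ≤ (n:ℝ) := by
    have : ⌈8 * σ2 / (ε * δ ^ 2)⌉₊ ≤ n := by omega
    exact le_trans (Nat.le_ceil _) (by exact_mod_cast this)
  have hnB : 1 / δ ≤ (n:ℝ) := by
    have : ⌈1 / δ⌉₊ ≤ n := by omega
    exact le_trans (Nat.le_ceil _) (by exact_mod_cast this)
  have hnC : 16 / (ε * δ) ≤ (n:ℝ) := by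
    have : ⌈16 / (ε * δ)⌉₊ ≤ n := by omega
    exact le_trans (Nat.le_ceil _) (by exact_mod_cast this)
  by_cases hXne : Nonempty (Fin n → X)
  case neg =>
    haveI : IsEmpty (Fin n → X) := not_nonempty_iff.mp hXne
    refine ⟨PEmpty, inferInstance, fun xs => (hXne ⟨xs⟩).elim, fun p => p.1.elim, ?_, ?_⟩
    · simp only [Fintype.card_pempty, Nat.cast_zero]
      positivity
    · rw [Finset.univ_eq_empty, Finset.sum_empty]
      exact le_of_lt hε
  case pos =>
  haveI : Inhabited (Fin n → X) := Classical.inhabited_of_nonempty hXne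
  -- notation
  set b : ℝ := (n:ℝ) * (condEnt P + δ / 2) with hbdef
  set T : (Fin n → U) → Finset (Fin n → X) := fun us =>
    Finset.univ.filter (fun xs =>
      0 < ∏ t, P (xs t, us t) ∧ ∑ t, g (xs t, us t) ≤ b) with hTdef
  set m : ℕ := ⌊(2:ℝ) ^ ((n:ℝ) * (condEnt P + δ))⌋₊ with hmdef
  have hrnn : (0:ℝ) ≤ 2 ^ ((n:ℝ) * (condEnt P + δ)) := le_of_lt (Real.rpow_pos_of_pos two_pos _)
  have hexp1 : (1:ℝ) ≤ (n:ℝ) * (condEnt P + δ) := by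
    have h1 : (1:ℝ) ≤ (n:ℝ) * δ := by
      rw [div_le_iff₀ hδ] at hnB; linarith
    nlinarith
  have h2le : (2:ℝ) ≤ 2 ^ ((n:ℝ) * (condEnt P + δ)) := by
    calc (2:ℝ) = 2 ^ (1:ℝ) := (Real.rpow_one 2).symm
      _ ≤ 2 ^ ((n:ℝ) * (condEnt P + δ)) :=
          Real.rpow_le_rpow_of_exponent_le one_le_two hexp1
  have hm1 : 1 ≤ m := by
    rw [hmdef]
    exact Nat.le_floor (by exact_mod_cast (by linarith : (1:ℝ) ≤ 2 ^ ((n:ℝ) * (condEnt P + δ))))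
  have hm0 : (0:ℝ) < m := by exact_mod_cast hm1
  have hmle : (m:ℝ) ≤ 2 ^ ((n:ℝ) * (condEnt P + δ)) := Nat.floor_le hrnn
  have hmlb : 2 ^ ((n:ℝ) * (condEnt P + δ)) / 2 ≤ (m:ℝ) := by
    have := Nat.sub_one_lt_floor ((2:ℝ) ^ ((n:ℝ) * (condEnt P + δ)))
    rw [← hmdef] at this
    linarith
  -- conversion between double sums and sums over sequences of pairs
  have hconv : ∀ F : (Fin n → X × U) → ℝ,
      ∑ xs : Fin n → X, ∑ us : Fin n → U, F (fun t => (xs t, us t))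
        = ∑ ws : Fin n → X × U, F ws := by
    intro F
    calc ∑ xs : Fin n → X, ∑ us : Fin n → U, F (fun t => (xs t, us t))
        = ∑ pq : (Fin n → X) × (Fin n → U), F (fun t => (pq.1 t, pq.2 t)) :=
          (Fintype.sum_prod_type (f := fun pq : (Fin n → X) × (Fin n → U) =>
            F (fun t => (pq.1 t, pq.2 t)))).symm
      _ = ∑ ws : Fin n → X × U, F ws :=
          (Fintype.sum_equiv (Equiv.arrowProdEquivProdArrow (Fin n) (fun _ => X) (fun _ => U))
            (fun ws => F ws) (fun pq => F (fun t => (pq.1 t, pq.2 t))) (fun ws => rfl)).symm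
  have htot : ∑ ws : Fin n → X × U, ∏ t, P (ws t) = 1 := by
    rw [sw_sum_fun_prod (fun _ z => P z)]
    simp [hP1]
  -- Chebyshev bound
  have hcheb : ∑ ws : Fin n → X × U,
      (if b < ∑ t, g (ws t) then ∏ t, P (ws t) else 0) ≤ ε / 2 := by
    have hd2 : (0:ℝ) < ((n:ℝ) * (δ / 2)) ^ 2 := by positivity
    have hpt : ∀ ws : Fin n → X × U,
        (if b < ∑ t, g (ws t) then ∏ t, P (ws t) else 0)
          ≤ (∏ t, P (ws t)) * (∑ t, (g (ws t) - condEnt P)) ^ 2 / ((n:ℝ) * (δ / 2)) ^ 2 := by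
      intro ws
      have hq : 0 ≤ ∏ t, P (ws t) := Finset.prod_nonneg fun t _ => hP0 _
      by_cases hc : b < ∑ t, g (ws t)
      · rw [if_pos hc]
        have hsum : ∑ t, (g (ws t) - condEnt P)
            = (∑ t, g (ws t)) - (n:ℝ) * condEnt P := by
          rw [Finset.sum_sub_distrib, Finset.sum_const, Finset.card_univ, Fintype.card_fin,
            nsmul_eq_mul]
        have hgt : (n:ℝ) * (δ / 2) < ∑ t, (g (ws t) - condEnt P) := by
          rw [hsum, hbdef] at *
          nlinarith
        have hsq : ((n:ℝ) * (δ / 2)) ^ 2 ≤ (∑ t, (g (ws t) - condEnt P)) ^ 2 := by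
          have h1 : (0:ℝ) ≤ (n:ℝ) * (δ / 2) := by positivity
          nlinarith
        rw [le_div_iff₀ hd2]
        calc (∏ t, P (ws t)) * ((n:ℝ) * (δ / 2)) ^ 2
            ≤ (∏ t, P (ws t)) * (∑ t, (g (ws t) - condEnt P)) ^ 2 :=
              mul_le_mul_of_nonneg_left hsq hq
          _ = _ := rfl
      · rw [if_neg hc]
        positivity
    calc (∑ ws : Fin n → X × U, (if b < ∑ t, g (ws t) then ∏ t, P (ws t) else 0))
        ≤ ∑ ws : Fin n → X × U,
            (∏ t, P (ws t)) * (∑ t, (g (ws t) - condEnt P)) ^ 2 / ((n:ℝ) * (δ / 2)) ^ 2 :=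
          Finset.sum_le_sum fun ws _ => hpt ws
      _ = ((n:ℝ) * σ2) / ((n:ℝ) * (δ / 2)) ^ 2 := by
          rw [← Finset.sum_div]
          congr 1
          exact sw_second_moment P (fun z => g z - condEnt P) hP1 hg0 n
      _ ≤ ε / 2 := by
          rw [div_le_iff₀ hd2]
          have hnA' : 8 * σ2 ≤ (n:ℝ) * (ε * δ ^ 2) := by
            rw [div_le_iff₀ (by positivity)] at hnA
            linarith
          nlinarith
  -- typical set cardinality bound
  have hTcard : ∀ us : Fin n → U, ((T us).card : ℝ) ≤ 2 ^ b := by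
    intro us
    rcases (T us).eq_empty_or_nonempty with hemp | ⟨xs0, hxs0⟩
    · rw [hemp]
      simp only [Finset.card_empty, Nat.cast_zero]
      positivity
    · set pu : ℝ := ∏ t, ∑ x, P (x, us t) with hpudef
      have hmarg : ∑ xs : Fin n → X, ∏ t, P (xs t, us t) = pu :=
        sw_sum_fun_prod (fun t x => P (x, us t))
      have hxs0' := (Finset.mem_filter.mp hxs0).2
      have hpupos : 0 < pu := by
        rw [← hmarg]
        have h1 : ∏ t, P (xs0 t, us t) ≤ ∑ xs : Fin n → X, ∏ t, P (xs t, us t) :=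
          Finset.single_le_sum (f := fun xs => ∏ t, P (xs t, us t))
            (fun xs _ => Finset.prod_nonneg fun t _ => hP0 _) (Finset.mem_univ xs0)
        exact lt_of_lt_of_le hxs0'.1 h1
      have hc : (0:ℝ) < 2 ^ (-b) := Real.rpow_pos_of_pos two_pos _
      have hkey : ∀ xs ∈ T us, pu * 2 ^ (-b) ≤ ∏ t, P (xs t, us t) := by
        intro xs hxs
        have hxs' := (Finset.mem_filter.mp hxs).2
        have hfz : ∀ t, P (xs t, us t) ≠ 0 := by
          intro t h0
          have : ∏ t, P (xs t, us t) = 0 := Finset.prod_eq_zero (Finset.mem_univ t) h0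
          rw [this] at hxs'
          exact lt_irrefl 0 hxs'.1
        have heq : ∏ t, P (xs t, us t)
            = pu * 2 ^ (-(∑ t, g (xs t, us t))) := by
          calc ∏ t, P (xs t, us t)
              = ∏ t, ((∑ x, P (x, us t)) * 2 ^ (-(g (xs t, us t)))) :=
                Finset.prod_congr rfl fun t _ => hfac (xs t, us t) (hfz t)
            _ = pu * ∏ t, (2:ℝ) ^ (-(g (xs t, us t))) := Finset.prod_mul_distrib
            _ = pu * 2 ^ (-(∑ t, g (xs t, us t))) := by
                rw [← sw_rpow_sum, ← Finset.sum_neg_distrib]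
        rw [heq]
        apply mul_le_mul_of_nonneg_left _ (le_of_lt hpupos)
        apply Real.rpow_le_rpow_of_exponent_le one_le_two
        linarith [hxs'.2]
      have hsum1 : ((T us).card : ℝ) * (pu * 2 ^ (-b)) ≤ pu := by
        calc ((T us).card : ℝ) * (pu * 2 ^ (-b))
            = ∑ _xs ∈ T us, pu * 2 ^ (-b) := by
              rw [Finset.sum_const, nsmul_eq_mul]
          _ ≤ ∑ xs ∈ T us, ∏ t, P (xs t, us t) := Finset.sum_le_sum hkey
          _ ≤ ∑ xs : Fin n → X, ∏ t, P (xs t, us t) :=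
              Finset.sum_le_sum_of_subset_of_nonneg (Finset.subset_univ _)
                (fun xs _ _ => Finset.prod_nonneg fun t _ => hP0 _)
          _ = pu := hmarg
      have h2 : ((T us).card : ℝ) * 2 ^ (-b) ≤ 1 := by
        have := hsum1
        rw [show ((T us).card : ℝ) * (pu * 2 ^ (-b)) = (((T us).card : ℝ) * 2 ^ (-b)) * pu
          by ring] at this
        nlinarith
      rw [show ((T us).card : ℝ) = (((T us).card : ℝ) * 2 ^ (-b)) * 2 ^ b by
        rw [mul_assoc, ← Real.rpow_add two_pos]; simp]
      calc (((T us).card : ℝ) * 2 ^ (-b)) * 2 ^ b ≤ 1 * 2 ^ b :=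
        mul_le_mul_of_nonneg_right h2 (le_of_lt (Real.rpow_pos_of_pos two_pos _))
        _ = 2 ^ b := one_mul _
  -- decoder from a binning function
  set Dec : ((Fin n → X) → Fin m) → Fin m × (Fin n → U) → (Fin n → X) := fun φ bu =>
    if hex : ∃ xs, xs ∈ T bu.2 ∧ φ xs = bu.1 then hex.choose else default with hDecdef
  set Atyp : ℝ := ∑ xs : Fin n → X, ∑ us : Fin n → U,
    (if xs ∉ T us then ∏ t, P (xs t, us t) else 0) with hAtypdef
  set Coll : ((Fin n → X) → Fin m) → ℝ := fun φ =>
    ∑ xs : Fin n → X, ∑ us : Fin n → U,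
      (if ∃ xs', xs' ≠ xs ∧ xs' ∈ T us ∧ φ xs' = φ xs then ∏ t, P (xs t, us t) else 0)
    with hColldef
  -- pointwise error decomposition
  have hpt : ∀ (φ : (Fin n → X) → Fin m) (xs : Fin n → X) (us : Fin n → U),
      (if Dec φ (φ xs, us) ≠ xs then ∏ t, P (xs t, us t) else 0)
        ≤ (if xs ∉ T us then ∏ t, P (xs t, us t) else 0)
          + (if ∃ xs', xs' ≠ xs ∧ xs' ∈ T us ∧ φ xs' = φ xs
              then ∏ t, P (xs t, us t) else 0) := by
    intro φ xs us
    have hp : (0:ℝ) ≤ ∏ t, P (xs t, us t) := Finset.prod_nonneg fun t _ => hP0 _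
    have h1 : (0:ℝ) ≤ (if xs ∉ T us then ∏ t, P (xs t, us t) else 0) := by
      split <;> simp [hp]
    have h2 : (0:ℝ) ≤ (if ∃ xs', xs' ≠ xs ∧ xs' ∈ T us ∧ φ xs' = φ xs
        then ∏ t, P (xs t, us t) else 0) := by
      split <;> simp [hp]
    by_cases hD : Dec φ (φ xs, us) ≠ xs
    · rw [if_pos hD]
      by_cases hmem : xs ∈ T us
      · have hex : ∃ xs', xs' ∈ T (φ xs, us).2 ∧ φ xs' = (φ xs, us).1 := ⟨xs, hmem, rfl⟩
        have hDeq : Dec φ (φ xs, us) = hex.choose := by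
          rw [hDecdef]
          exact dif_pos hex
        have hch := hex.choose_spec
        have hco : hex.choose ≠ xs := hDeq ▸ hD
        have : ∃ xs', xs' ≠ xs ∧ xs' ∈ T us ∧ φ xs' = φ xs :=
          ⟨hex.choose, hco, hch.1, hch.2⟩
        rw [if_pos this]
        linarith
      · rw [if_pos hmem]
        linarith
    · rw [if_neg hD]
      linarith
  have hErr : ∀ φ : (Fin n → X) → Fin m,
      (∑ xs : Fin n → X, ∑ us : Fin n → U,
        (if Dec φ (φ xs, us) ≠ xs then ∏ t, P (xs t, us t) else 0)) ≤ Atyp + Coll φ := by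
    intro φ
    rw [hAtypdef]
    calc (∑ xs : Fin n → X, ∑ us : Fin n → U,
        (if Dec φ (φ xs, us) ≠ xs then ∏ t, P (xs t, us t) else 0))
        ≤ ∑ xs : Fin n → X, ∑ us : Fin n → U,
            ((if xs ∉ T us then ∏ t, P (xs t, us t) else 0)
              + (if ∃ xs', xs' ≠ xs ∧ xs' ∈ T us ∧ φ xs' = φ xs
                  then ∏ t, P (xs t, us t) else 0)) :=
          Finset.sum_le_sum fun xs _ => Finset.sum_le_sum fun us _ => hpt φ xs us
      _ = _ := by
          rw [← Finset.sum_add_distrib]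
          exact Finset.sum_congr rfl fun xs _ => Finset.sum_add_distrib
  -- atypical mass is small
  have hAtyp : Atyp ≤ ε / 2 := by
    have hptA : ∀ (xs : Fin n → X) (us : Fin n → U),
        (if xs ∉ T us then ∏ t, P (xs t, us t) else 0)
          ≤ (if b < ∑ t, g (xs t, us t) then ∏ t, P (xs t, us t) else 0) := by
      intro xs us
      have hp : (0:ℝ) ≤ ∏ t, P (xs t, us t) := Finset.prod_nonneg fun t _ => hP0 _
      have h2 : (0:ℝ) ≤ (if b < ∑ t, g (xs t, us t) then ∏ t, P (xs t, us t) else 0) := by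
        split <;> simp [hp]
      by_cases hmem : xs ∈ T us
      · rw [if_neg (by simpa using hmem)]
        exact h2
      · rw [if_pos hmem]
        rw [hTdef] at hmem
        simp only [Finset.mem_filter, Finset.mem_univ, true_and, not_and, not_le, not_lt] at hmem
        by_cases hpp : 0 < ∏ t, P (xs t, us t)
        · rw [if_pos (hmem hpp)]
        · have h0 : ∏ t, P (xs t, us t) = 0 := le_antisymm (not_lt.mp hpp) hp
          rw [h0]
          split <;> norm_num
    calc Atyp ≤ ∑ xs : Fin n → X, ∑ us : Fin n → U,
          (if b < ∑ t, g (xs t, us t) then ∏ t, P (xs t, us t) else 0) := by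
          rw [hAtypdef]
          exact Finset.sum_le_sum fun xs _ => Finset.sum_le_sum fun us _ => hptA xs us
      _ = ∑ ws : Fin n → X × U, (if b < ∑ t, g (ws t) then ∏ t, P (ws t) else 0) :=
          hconv (fun ws => if b < ∑ t, g (ws t) then ∏ t, P (ws t) else 0)
      _ ≤ ε / 2 := hcheb
  -- average collision mass is small
  have hprob1 : ∑ xs : Fin n → X, ∑ us : Fin n → U, ∏ t, P (xs t, us t) = 1 := by
    rw [hconv (fun ws => ∏ t, P (ws t))]
    exact htot
  set cA : ℕ := Fintype.card (Fin n → X) with hcAdef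
  have hcA1 : 1 ≤ cA := Fintype.card_pos
  have hinner : ∀ (xs : Fin n → X) (us : Fin n → U),
      (∑ φ : (Fin n → X) → Fin m,
        (if ∃ xs', xs' ≠ xs ∧ xs' ∈ T us ∧ φ xs' = φ xs then ∏ t, P (xs t, us t) else 0))
        ≤ (∏ t, P (xs t, us t)) * (2 ^ b * (m:ℝ) ^ (cA - 1)) := by
    intro xs us
    have hp : (0:ℝ) ≤ ∏ t, P (xs t, us t) := Finset.prod_nonneg fun t _ => hP0 _
    have hsub : Finset.univ.filter
        (fun φ : (Fin n → X) → Fin m => ∃ xs', xs' ≠ xs ∧ xs' ∈ T us ∧ φ xs' = φ xs)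
        ⊆ ((T us).erase xs).biUnion
            (fun xs' => Finset.univ.filter (fun φ : (Fin n → X) → Fin m => φ xs' = φ xs)) := by
      intro φ hφ
      obtain ⟨xs', hne, hmemT, heq⟩ := (Finset.mem_filter.mp hφ).2
      exact Finset.mem_biUnion.mpr ⟨xs', Finset.mem_erase.mpr ⟨hne, hmemT⟩,
        Finset.mem_filter.mpr ⟨Finset.mem_univ _, heq⟩⟩
    have hcard1 : ∀ xs' : Fin n → X, xs' ≠ xs →
        (Finset.univ.filter (fun φ : (Fin n → X) → Fin m => φ xs' = φ xs)).card
          = m ^ (cA - 1) := by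
      intro xs' hne
      have := sw_card_collide (A := Fin n → X) m hne
      rwa [Fintype.card_subtype] at this
    have hcount : ((Finset.univ.filter
        (fun φ : (Fin n → X) → Fin m => ∃ xs', xs' ≠ xs ∧ xs' ∈ T us ∧ φ xs' = φ xs)).card : ℝ)
        ≤ 2 ^ b * (m:ℝ) ^ (cA - 1) := by
      have h1 := Finset.card_le_card hsub
      have h2 := Finset.card_biUnion_le (s := (T us).erase xs)
        (t := fun xs' => Finset.univ.filter (fun φ : (Fin n → X) → Fin m => φ xs' = φ xs))
      have h3 : ∑ xs' ∈ (T us).erase xs,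
          (Finset.univ.filter (fun φ : (Fin n → X) → Fin m => φ xs' = φ xs)).card
          = ((T us).erase xs).card * m ^ (cA - 1) := by
        rw [Finset.sum_congr rfl (fun xs' hxs' =>
          hcard1 xs' (Finset.mem_erase.mp hxs').1), Finset.sum_const, smul_eq_mul]
      have h4 : (((T us).erase xs).card : ℝ) ≤ 2 ^ b :=
        le_trans (by exact_mod_cast Finset.card_erase_le) (hTcard us)
      have h5 : ((Finset.univ.filter
          (fun φ : (Fin n → X) → Fin m => ∃ xs', xs' ≠ xs ∧ xs' ∈ T us ∧ φ xs' = φ xs)).card : ℝ)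
          ≤ (((T us).erase xs).card : ℝ) * (m:ℝ) ^ (cA - 1) := by
        have := le_trans h1 (le_trans h2 (le_of_eq h3))
        exact_mod_cast this
      calc _ ≤ (((T us).erase xs).card : ℝ) * (m:ℝ) ^ (cA - 1) := h5
        _ ≤ 2 ^ b * (m:ℝ) ^ (cA - 1) :=
            mul_le_mul_of_nonneg_right h4 (by positivity)
    calc (∑ φ : (Fin n → X) → Fin m,
        (if ∃ xs', xs' ≠ xs ∧ xs' ∈ T us ∧ φ xs' = φ xs then ∏ t, P (xs t, us t) else 0))
        = ((Finset.univ.filter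
            (fun φ : (Fin n → X) → Fin m =>
              ∃ xs', xs' ≠ xs ∧ xs' ∈ T us ∧ φ xs' = φ xs)).card : ℝ)
            * (∏ t, P (xs t, us t)) := by
          rw [← Finset.sum_filter, Finset.sum_const, nsmul_eq_mul]
      _ ≤ (2 ^ b * (m:ℝ) ^ (cA - 1)) * (∏ t, P (xs t, us t)) :=
          mul_le_mul_of_nonneg_right hcount hp
      _ = (∏ t, P (xs t, us t)) * (2 ^ b * (m:ℝ) ^ (cA - 1)) := by ring
  have hcollavg : ∑ φ : (Fin n → X) → Fin m, Coll φ
      ≤ (Fintype.card ((Fin n → X) → Fin m) : ℝ) * (2 ^ b / m) := by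
    have hswap : ∑ φ : (Fin n → X) → Fin m, Coll φ
        = ∑ xs : Fin n → X, ∑ us : Fin n → U, ∑ φ : (Fin n → X) → Fin m,
            (if ∃ xs', xs' ≠ xs ∧ xs' ∈ T us ∧ φ xs' = φ xs
              then ∏ t, P (xs t, us t) else 0) := by
      rw [hColldef, Finset.sum_comm]
      exact Finset.sum_congr rfl fun xs _ => Finset.sum_comm
    rw [hswap]
    calc (∑ xs : Fin n → X, ∑ us : Fin n → U, ∑ φ : (Fin n → X) → Fin m,
        (if ∃ xs', xs' ≠ xs ∧ xs' ∈ T us ∧ φ xs' = φ xs then ∏ t, P (xs t, us t) else 0))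
        ≤ ∑ xs : Fin n → X, ∑ us : Fin n → U,
            (∏ t, P (xs t, us t)) * (2 ^ b * (m:ℝ) ^ (cA - 1)) :=
          Finset.sum_le_sum fun xs _ => Finset.sum_le_sum fun us _ => hinner xs us
      _ = (2 ^ b * (m:ℝ) ^ (cA - 1)) := by
          have hfac2 : ∀ xs : Fin n → X,
              ∑ us : Fin n → U, (∏ t, P (xs t, us t)) * (2 ^ b * (m:ℝ) ^ (cA - 1))
                = (∑ us : Fin n → U, ∏ t, P (xs t, us t))
                    * (2 ^ b * (m:ℝ) ^ (cA - 1)) :=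
            fun xs => (Finset.sum_mul _ _ _).symm
          rw [Finset.sum_congr rfl fun xs _ => hfac2 xs, ← Finset.sum_mul, hprob1, one_mul]
      _ = (Fintype.card ((Fin n → X) → Fin m) : ℝ) * (2 ^ b / m) := by
          rw [Fintype.card_fun, Fintype.card_fin, ← hcAdef]
          have hm' : (m:ℝ) ^ cA = (m:ℝ) ^ (cA - 1) * m := by
            rw [← pow_succ, Nat.sub_add_cancel hcA1]
          push_cast [hm']
          field_simp
  -- pick a good binning function
  haveI : Nonempty (Fin m) := ⟨⟨0, hm1⟩⟩
  have hexphi : ∃ φ ∈ (Finset.univ : Finset ((Fin n → X) → Fin m)), Coll φ ≤ 2 ^ b / m := by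
    apply Finset.exists_le_of_sum_le Finset.univ_nonempty
    calc ∑ φ : (Fin n → X) → Fin m, Coll φ
        ≤ (Fintype.card ((Fin n → X) → Fin m) : ℝ) * (2 ^ b / m) := hcollavg
      _ = ∑ _φ : (Fin n → X) → Fin m, ((2:ℝ) ^ b / (m:ℝ)) := by
          rw [Finset.sum_const, nsmul_eq_mul, Finset.card_univ]
  obtain ⟨φ, -, hφ⟩ := hexphi
  -- the collision bound is small
  have hfinal : (2:ℝ) ^ b / m ≤ ε / 2 := by
    rw [div_le_iff₀ hm0]
    have hx8 : 8 ≤ ε * ((n:ℝ) * δ / 2) := by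
      rw [div_le_iff₀ (by positivity)] at hnC
      nlinarith
    have hx : (4:ℝ) ≤ ε * 2 ^ ((n:ℝ) * δ / 2) := by
      have hlog : (0.6931471803 : ℝ) < Real.log 2 := Real.log_two_gt_d9
      have hexp := Real.add_one_le_exp (Real.log 2 * ((n:ℝ) * δ / 2))
      have h2x : (2:ℝ) ^ ((n:ℝ) * δ / 2) = Real.exp (Real.log 2 * ((n:ℝ) * δ / 2)) := by
        rw [Real.rpow_def_of_pos two_pos]
      have hxnn : (0:ℝ) ≤ (n:ℝ) * δ / 2 := by positivity
      rw [h2x]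
      nlinarith
    have hsplit : (2:ℝ) ^ ((n:ℝ) * (condEnt P + δ)) = 2 ^ b * 2 ^ ((n:ℝ) * δ / 2) := by
      rw [← Real.rpow_add two_pos]
      congr 1
      rw [hbdef]
      ring
    have hbpos : (0:ℝ) < 2 ^ b := Real.rpow_pos_of_pos two_pos _
    have hdpos : (0:ℝ) < 2 ^ ((n:ℝ) * δ / 2) := Real.rpow_pos_of_pos two_pos _
    rw [hsplit] at hmlb
    nlinarith
  refine ⟨Fin m, inferInstance, φ, Dec φ, ?_, ?_⟩
  · rw [Fintype.card_fin]
    exact hmle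
  · calc (∑ xs : Fin n → X, ∑ us : Fin n → U,
        (if Dec φ (φ xs, us) ≠ xs then ∏ t, P (xs t, us t) else 0))
        ≤ Atyp + Coll φ := hErr φ
      _ ≤ ε / 2 + ε / 2 := add_le_add hAtyp (le_trans hφ hfinal)
      _ = ε := by ring
end

section
/- Fano's inequality: Let X and X̂ be random variables on a probability space taking values in a finite set S with |S| ≥ 2, and let Pe = Pr[X ≠ X̂]. Then H(X | X̂) ≤ h₂(Pe) + Pe · log₂(|S| − 1), where h₂(t) = −t log₂ t − (1−t) log₂(1−t) is the binary entropy function (with h₂(0) = h₂(1) = 0). -/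
open scoped BigOperators

/-- The binary entropy function `h₂(t)` (base 2), with `h₂(0) = h₂(1) = 0`. -/
noncomputable def binEnt (t : ℝ) : ℝ :=
  -(t * Real.logb 2 t) - (1 - t) * Real.logb 2 (1 - t)


lemma pt (a b : ℝ) (ha : 0 ≤ a) (hb : 0 ≤ b) (h : a ≠ 0 → 0 < b) :
    -(a * Real.logb 2 a) + a * Real.logb 2 b ≤ (b - a) / Real.log 2 := by
  have h2 : (0:ℝ) < Real.log 2 := Real.log_pos (by norm_num)
  rcases eq_or_lt_of_le ha with h0 | hpos
  · rw [← h0]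
    simp
    positivity
  · have hb' : 0 < b := h hpos.ne'
    have key : Real.log b - Real.log a ≤ b / a - 1 := by
      have := Real.log_le_sub_one_of_pos (div_pos hb' hpos)
      rwa [Real.log_div hb'.ne' hpos.ne'] at this
    have key2 : a * Real.log b - a * Real.log a ≤ b - a := by
      have := mul_le_mul_of_nonneg_left key hpos.le
      have hba : a * (b / a) = b := mul_div_cancel₀ b hpos.ne'
      nlinarith
    rw [Real.logb, Real.logb]
    calc -(a * (Real.log a / Real.log 2)) + a * (Real.log b / Real.log 2)
        = (a * Real.log b - a * Real.log a) / Real.log 2 := by ring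
      _ ≤ (b - a) / Real.log 2 := by gcongr

lemma core {S : Type*} [Fintype S] (hK : 2 ≤ Fintype.card S)
    (P : S × S → ℝ) (hP0 : ∀ z, 0 ≤ P z)
    (Pe : ℝ) (hPe0 : 0 ≤ Pe) (hPe1 : Pe ≤ 1)
    (hdiag : ∑ u, P (u, u) = 1 - Pe)
    (htot : ∑ z, P z = 1) :
    condEnt P ≤ binEnt Pe + Pe * Real.logb 2 ((Fintype.card S : ℝ) - 1) := by
  classical
  have h2 : (0:ℝ) < Real.log 2 := Real.log_pos (by norm_num)
  set K : ℝ := (Fintype.card S : ℝ) with hKdef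
  have h2K : (2:ℝ) ≤ K := by simp only [hKdef]; exact_mod_cast hK
  have hKpos : (0:ℝ) < K - 1 := by linarith
  set r : S × S → ℝ := fun z => if z.1 = z.2 then 1 - Pe else Pe / (K - 1) with hr
  have hr0 : ∀ z, 0 ≤ r z := by
    intro z
    by_cases h : z.1 = z.2
    · simp only [hr, h, if_true]
      linarith
    · simp only [hr, h, if_false]
      positivity
  have hq0 : ∀ u : S, 0 ≤ ∑ x, P (x, u) := fun u => Finset.sum_nonneg fun x _ => hP0 _
  have hdiag' : ∑ z ∈ Finset.univ.filter (fun z : S × S => z.1 = z.2), P z = 1 - Pe := by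
    rw [← hdiag, Finset.sum_filter, Fintype.sum_prod_type]
    congr 1
    funext x
    simp [Finset.sum_ite_eq]
  have hoff : ∑ z ∈ Finset.univ.filter (fun z : S × S => ¬ z.1 = z.2), P z = Pe := by
    have hsplit := Finset.sum_filter_add_sum_filter_not Finset.univ
      (fun z : S × S => z.1 = z.2) P
    rw [htot] at hsplit
    linarith [hdiag', hsplit]
  have hle_off : ∀ z : S × S, z.1 ≠ z.2 → P z ≤ Pe := by
    intro z hz
    rw [← hoff]
    exact Finset.single_le_sum (f := P) (fun i _ => hP0 i) (by simp [hz])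
  have hle_diag : ∀ u : S, P (u, u) ≤ 1 - Pe := by
    intro u
    rw [← hdiag]
    exact Finset.single_le_sum (f := fun u => P (u, u)) (fun i _ => hP0 _) (Finset.mem_univ u)
  have hPq : ∀ z : S × S, P z ≤ ∑ x, P (x, z.2) := fun z =>
    Finset.single_le_sum (f := fun x => P (x, z.2)) (fun i _ => hP0 _) (Finset.mem_univ z.1)
  have hqsum : ∑ u : S, ∑ x : S, P (x, u) = 1 := by
    rw [← htot, Fintype.sum_prod_type_right]
  have hrsum : ∀ u : S, ∑ x, r (x, u) = 1 := by
    intro u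
    rw [← Finset.add_sum_erase Finset.univ _ (Finset.mem_univ u)]
    have he : ∀ x ∈ Finset.univ.erase u, r (x, u) = Pe / (K - 1) := by
      intro x hx
      simp [hr, (Finset.mem_erase.mp hx).1]
    rw [Finset.sum_congr rfl he, Finset.sum_const, Finset.card_erase_of_mem (Finset.mem_univ u),
      Finset.card_univ]
    simp only [hr, if_pos rfl]
    rw [nsmul_eq_mul]
    have hc : ((Fintype.card S - 1 : ℕ) : ℝ) = K - 1 := by
      have h1 : 1 ≤ Fintype.card S := by omega
      push_cast [h1]
      ring
    rw [hc]
    field_simp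
    ring
  -- positivity of q*r when P z ≠ 0
  have hqr_pos : ∀ z : S × S, P z ≠ 0 → 0 < (∑ x, P (x, z.2)) ∧ 0 < r z := by
    intro z hz
    have hPz : 0 < P z := lt_of_le_of_ne (hP0 z) (Ne.symm hz)
    refine ⟨lt_of_lt_of_le hPz (hPq z), ?_⟩
    by_cases h : z.1 = z.2
    · have : P (z.1, z.1) ≤ 1 - Pe := hle_diag z.1
      have hz1 : z = (z.1, z.1) := by rw [Prod.ext_iff]; exact ⟨rfl, h.symm⟩
      simp only [hr, h, if_true]
      rw [hz1] at hPz
      linarith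
    · have := hle_off z h
      simp only [hr, h, if_false]
      have hPe : 0 < Pe := lt_of_lt_of_le hPz this
      positivity
  -- Step A
  have stepA : condEnt P
      = ∑ z : S × S, (-(P z * Real.logb 2 (P z)) + P z * Real.logb 2 (∑ x, P (x, z.2))) := by
    rw [condEnt, shEnt, shEnt, Finset.sum_add_distrib]
    have hA2 : ∑ z : S × S, P z * Real.logb 2 (∑ x, P (x, z.2))
        = ∑ u : S, (∑ x, P (x, u)) * Real.logb 2 (∑ x, P (x, u)) := by
      rw [Fintype.sum_prod_type_right]
      refine Finset.sum_congr rfl fun u _ => ?_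
      rw [Finset.sum_mul]
    rw [hA2]
    simp [Finset.sum_neg_distrib]
  -- Step B
  have stepB : binEnt Pe + Pe * Real.logb 2 (K - 1)
      = ∑ z : S × S, -(P z * Real.logb 2 (r z)) := by
    rw [← Finset.sum_filter_add_sum_filter_not Finset.univ (fun z : S × S => z.1 = z.2)]
    have hd : ∑ z ∈ Finset.univ.filter (fun z : S × S => z.1 = z.2),
        -(P z * Real.logb 2 (r z)) = -((1 - Pe) * Real.logb 2 (1 - Pe)) := by
      have hc : ∀ z ∈ Finset.univ.filter (fun z : S × S => z.1 = z.2),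
          -(P z * Real.logb 2 (r z)) = -(P z * Real.logb 2 (1 - Pe)) := by
        intro z hz
        have : z.1 = z.2 := (Finset.mem_filter.mp hz).2
        simp [hr, this]
      rw [Finset.sum_congr rfl hc, Finset.sum_neg_distrib, ← Finset.sum_mul, hdiag']
    have ho : ∑ z ∈ Finset.univ.filter (fun z : S × S => ¬ z.1 = z.2),
        -(P z * Real.logb 2 (r z)) = -(Pe * Real.logb 2 (Pe / (K - 1))) := by
      have hc : ∀ z ∈ Finset.univ.filter (fun z : S × S => ¬ z.1 = z.2),
          -(P z * Real.logb 2 (r z)) = -(P z * Real.logb 2 (Pe / (K - 1))) := by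
        intro z hz
        have : ¬ z.1 = z.2 := (Finset.mem_filter.mp hz).2
        simp [hr, this]
      rw [Finset.sum_congr rfl hc, Finset.sum_neg_distrib, ← Finset.sum_mul, hoff]
    rw [hd, ho, binEnt]
    rcases eq_or_lt_of_le hPe0 with h0 | hpos
    · simp [← h0]
    · rw [Real.logb_div hpos.ne' hKpos.ne']
      ring
  -- Step C : pointwise bound and summation
  have key : ∀ z : S × S,
      -(P z * Real.logb 2 (P z)) + P z * Real.logb 2 ((∑ x, P (x, z.2)) * r z)
        ≤ ((∑ x, P (x, z.2)) * r z - P z) / Real.log 2 := by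
    intro z
    refine pt _ _ (hP0 z) (mul_nonneg (hq0 _) (hr0 _)) fun hz => ?_
    obtain ⟨h1, h2'⟩ := hqr_pos z hz
    exact mul_pos h1 h2'
  have split : ∀ z : S × S, P z * Real.logb 2 ((∑ x, P (x, z.2)) * r z)
      = P z * Real.logb 2 (∑ x, P (x, z.2)) + P z * Real.logb 2 (r z) := by
    intro z
    by_cases hz : P z = 0
    · simp [hz]
    · obtain ⟨h1, h2'⟩ := hqr_pos z hz
      rw [Real.logb_mul h1.ne' h2'.ne']
      ring
  have hsum0 : ∑ z : S × S, ((∑ x, P (x, z.2)) * r z - P z) / Real.log 2 = 0 := by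
    rw [← Finset.sum_div]
    have : ∑ z : S × S, ((∑ x, P (x, z.2)) * r z - P z) = 0 := by
      rw [Finset.sum_sub_distrib, htot]
      have : ∑ z : S × S, (∑ x, P (x, z.2)) * r z = 1 := by
        rw [Fintype.sum_prod_type_right]
        have : ∀ u : S, ∑ x : S, (∑ x', P (x', u)) * r (x, u) = ∑ x', P (x', u) := by
          intro u
          rw [← Finset.mul_sum, hrsum u, mul_one]
        rw [Finset.sum_congr rfl fun u _ => this u, hqsum]
      rw [this]
      ring
    rw [this, zero_div]
  have main : ∑ z : S × S,
      (-(P z * Real.logb 2 (P z)) + P z * Real.logb 2 ((∑ x, P (x, z.2)) * r z)) ≤ 0 := by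
    calc ∑ z : S × S, (-(P z * Real.logb 2 (P z)) + P z * Real.logb 2 ((∑ x, P (x, z.2)) * r z))
        ≤ ∑ z : S × S, ((∑ x, P (x, z.2)) * r z - P z) / Real.log 2 :=
          Finset.sum_le_sum fun z _ => key z
      _ = 0 := hsum0
  -- combine
  have combine : condEnt P = (∑ z : S × S,
      (-(P z * Real.logb 2 (P z)) + P z * Real.logb 2 ((∑ x, P (x, z.2)) * r z)))
      + ∑ z : S × S, -(P z * Real.logb 2 (r z)) := by
    rw [stepA, ← Finset.sum_add_distrib]
    refine Finset.sum_congr rfl fun z _ => ?_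
    rw [split z]
    ring
  rw [combine, ← stepB]
  linarith [main]

/-- Fano's inequality: `H(X|X̂) ≤ h₂(Pe) + Pe · log₂(|S| − 1)` where `Pe = Pr[X ≠ X̂]`. -/
theorem fano_inequality
    {Ω : Type*} [MeasurableSpace Ω] (μ : MeasureTheory.Measure Ω)
    [MeasureTheory.IsProbabilityMeasure μ]
    {S : Type*} [Fintype S] [MeasurableSpace S] [MeasurableSingletonClass S]
    (hS : 2 ≤ Fintype.card S)
    (X Xh : Ω → S) (hX : Measurable X) (hXh : Measurable Xh) :
    condEnt (fun z : S × S => (μ {ω | X ω = z.1 ∧ Xh ω = z.2}).toReal) ≤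
      binEnt ((μ {ω | X ω ≠ Xh ω}).toReal) +
        (μ {ω | X ω ≠ Xh ω}).toReal * Real.logb 2 ((Fintype.card S : ℝ) - 1) := by
  classical
  set A : S × S → Set Ω := fun z => {ω | X ω = z.1 ∧ Xh ω = z.2} with hA
  have hAm : ∀ z : S × S, MeasurableSet (A z) := by
    intro z
    exact (hX (measurableSet_singleton z.1)).inter (hXh (measurableSet_singleton z.2))
  have hAdisj : Pairwise (Function.onFun Disjoint A) := by
    intro z z' hzz
    refine Set.disjoint_left.mpr fun ω hω hω' => hzz ?_
    obtain ⟨h1, h2⟩ := hω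
    obtain ⟨h1', h2'⟩ := hω'
    exact Prod.ext (h1 ▸ h1') (h2 ▸ h2') |>.symm ▸ rfl
  have hAcover : (⋃ z, A z) = Set.univ := by
    ext ω
    simp only [Set.mem_iUnion, Set.mem_univ, iff_true]
    exact ⟨(X ω, Xh ω), rfl, rfl⟩
  set P : S × S → ℝ := fun z => (μ (A z)).toReal with hP
  have hfin : ∀ z, μ (A z) ≠ ⊤ := fun z => MeasureTheory.measure_ne_top μ _
  have hP0 : ∀ z, 0 ≤ P z := fun z => ENNReal.toReal_nonneg
  have htotE : ∑ z : S × S, μ (A z) = 1 := by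
    rw [← tsum_fintype (L := SummationFilter.unconditional _), ← MeasureTheory.measure_iUnion hAdisj hAm, hAcover,
      MeasureTheory.measure_univ]
  have htot : ∑ z : S × S, P z = 1 := by
    simp only [hP]
    rw [← ENNReal.toReal_sum (fun z _ => hfin z), htotE, ENNReal.toReal_one]
  -- diagonal
  have hEeq : {ω | X ω = Xh ω} = ⋃ u : S, A (u, u) := by
    ext ω
    simp only [Set.mem_setOf_eq, Set.mem_iUnion, hA]
    constructor
    · intro h
      exact ⟨X ω, rfl, h.symm⟩
    · rintro ⟨u, h1, h2⟩
      rw [h1, h2]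
  have hEm : MeasurableSet {ω | X ω = Xh ω} := by
    rw [hEeq]
    exact MeasurableSet.iUnion fun u => hAm (u, u)
  have hdiagE : ∑ u : S, μ (A (u, u)) = μ {ω | X ω = Xh ω} := by
    rw [hEeq, ← tsum_fintype (L := SummationFilter.unconditional _)]
    refine (MeasureTheory.measure_iUnion ?_ fun u => hAm (u, u)).symm
    intro u u' huu
    exact hAdisj fun h => huu (congrArg Prod.fst h)
  have hcompl : {ω | X ω ≠ Xh ω} = {ω | X ω = Xh ω}ᶜ := rfl
  have haddE : μ {ω | X ω = Xh ω} + μ {ω | X ω ≠ Xh ω} = 1 := by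
    rw [hcompl]
    have := MeasureTheory.measure_add_measure_compl (μ := μ) hEm
    rwa [MeasureTheory.measure_univ] at this
  have hadd : (μ {ω | X ω = Xh ω}).toReal + (μ {ω | X ω ≠ Xh ω}).toReal = 1 := by
    rw [← ENNReal.toReal_add (MeasureTheory.measure_ne_top μ _) (MeasureTheory.measure_ne_top μ _),
      haddE, ENNReal.toReal_one]
  set Pe : ℝ := (μ {ω | X ω ≠ Xh ω}).toReal with hPe
  have hPe0 : 0 ≤ Pe := ENNReal.toReal_nonneg
  have hPe1 : Pe ≤ 1 := by
    have h0 : 0 ≤ (μ {ω | X ω = Xh ω}).toReal := ENNReal.toReal_nonneg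
    linarith
  have hdiag : ∑ u : S, P (u, u) = 1 - Pe := by
    simp only [hP]
    rw [← ENNReal.toReal_sum (fun u _ => hfin _), hdiagE]
    linarith [hadd]
  exact core hS P hP0 Pe hPe0 hPe1 hdiag htot
end
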